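/- arXiv:2208.06126 — 2 statements merged into one kernel-verified Lean document; each statement's English description precedes it below -/
import Mathlib

section
/- Let T be a tree on k ≥ 4 vertices that is not a path, and for a vertex v of T let m_T(v) be the number of vertices of a largest connected component of T − v; set m(T) = min over vertices v of m_T(v). Then for every n ≥ k, ex_c(n,T) ≥ n − 1 + ⌊(n−1)/(m(T)−1)⌋ · C(m(T)−1, 2), where C(m,2) denotes the binomial coefficient m choose 2. -/
open SimpleGraph

/-- `G` contains a copy of `F`, i.e. a subgraph isomorphic to `F`
(given by an injective graph homomorphism). -/
def ContainsCopy {α β : Type*} (F : SimpleGraph α) (G : SimpleGraph β) : Prop :=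
  ∃ f : α ↪ β, ∀ ⦃a b : α⦄, F.Adj a b → G.Adj (f a) (f b)

/-- The connected Turán number `ex_c(n, F)`: the maximum number of edges of a
connected `F`-free simple graph on `n` vertices. -/
noncomputable def exConn {α : Type*} (n : ℕ) (F : SimpleGraph α) : ℕ :=
  sSup {m | ∃ G : SimpleGraph (Fin n), G.Connected ∧ ¬ ContainsCopy F G ∧ m = G.edgeSet.ncard}

/-- `G` is a path graph: it has a Hamiltonian path and no other edges.
(For trees, having a Hamiltonian path is equivalent to being a path.) -/
def IsPathGraph {V : Type*} (G : SimpleGraph V) : Prop :=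
  ∃ (u v : V) (p : G.Walk u v), p.IsPath ∧ ∀ w, w ∈ p.support

/-- `m_T(v)`: the number of vertices of a largest connected component of `T - v`. -/
noncomputable def largestCompDelVert {V : Type*} (T : SimpleGraph V) (v : V) : ℕ :=
  sSup {m | ∃ c : (T.induce {u | u ≠ v}).ConnectedComponent, m = c.supp.ncard}

/-- `m(T) = min_{v ∈ V(T)} m_T(v)`. -/
noncomputable def branchingNumber {V : Type*} (T : SimpleGraph V) : ℕ :=
  sInf (Set.range fun v => largestCompDelVert T v)

/-! ### Auxiliary lemmas -/

section Aux

open Finset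

lemma le_exConn {α : Type*} {n : ℕ} {F : SimpleGraph α} (G : SimpleGraph (Fin n))
    (hc : G.Connected) (hf : ¬ ContainsCopy F G) : G.edgeSet.ncard ≤ exConn n F := by
  apply le_csSup
  · refine ⟨Nat.card (Sym2 (Fin n)), ?_⟩
    rintro m ⟨H, -, -, rfl⟩
    simpa [Set.ncard_univ] using Set.ncard_le_ncard (Set.subset_univ H.edgeSet) Set.finite_univ
  · exact ⟨G, hc, hf, rfl⟩

lemma comp_bddAbove {β : Type*} [Finite β] (G : SimpleGraph β) :
    BddAbove {m | ∃ c : G.ConnectedComponent, m = c.supp.ncard} := by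
  refine ⟨Nat.card β, ?_⟩
  rintro m ⟨c, rfl⟩
  simpa [Set.ncard_univ] using Set.ncard_le_ncard (Set.subset_univ c.supp) Set.finite_univ

lemma comp_ncard_le_largest {V : Type*} [Finite V] (T : SimpleGraph V) (v : V)
    (c : (T.induce {u | u ≠ v}).ConnectedComponent) :
    c.supp.ncard ≤ largestCompDelVert T v :=
  le_csSup (comp_bddAbove _) ⟨c, rfl⟩

lemma largest_le {V : Type*} [Finite V] (T : SimpleGraph V) (v : V) (b : ℕ)
    (hne : ∃ u : V, u ≠ v)
    (h : ∀ c : (T.induce {u | u ≠ v}).ConnectedComponent, c.supp.ncard ≤ b) :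
    largestCompDelVert T v ≤ b := by
  obtain ⟨u, hu⟩ := hne
  refine csSup_le ⟨_, ⟨(T.induce {u | u ≠ v}).connectedComponentMk ⟨u, hu⟩, rfl⟩⟩ ?_
  rintro m ⟨c, rfl⟩
  exact h c

lemma one_le_largest {V : Type*} [Finite V] (T : SimpleGraph V) (v : V)
    (hne : ∃ u : V, u ≠ v) : 1 ≤ largestCompDelVert T v := by
  obtain ⟨u, hu⟩ := hne
  set c := (T.induce {u | u ≠ v}).connectedComponentMk ⟨u, hu⟩
  refine le_trans ?_ (comp_ncard_le_largest T v c)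
  have hmem : (⟨u, hu⟩ : {u | u ≠ v}) ∈ c.supp := by
    simp [c, SimpleGraph.ConnectedComponent.mem_supp_iff]
  have : c.supp.Finite := Set.toFinite _
  exact (Set.ncard_pos this).mpr ⟨_, hmem⟩

/-! ### The flower construction (a bouquet of cliques sharing one vertex) -/

def flower (n b : ℕ) : SimpleGraph (Fin n) :=
  SimpleGraph.fromRel (fun i j => i.val = 0 ∨ (i.val - 1) / b = (j.val - 1) / b)

lemma flower_adj {n b : ℕ} (i j : Fin n) :
    (flower n b).Adj i j ↔ i ≠ j ∧ (i.val = 0 ∨ j.val = 0 ∨ (i.val - 1) / b = (j.val - 1) / b) := by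
  simp only [flower, fromRel_adj]
  constructor
  · rintro ⟨h, h2 | h2⟩ <;> tauto
  · rintro ⟨h, h2 | h2 | h2⟩ <;> tauto

lemma flower_connected {n b : ℕ} (hn : 0 < n) : (flower n b).Connected := by
  have : NeZero n := ⟨by omega⟩
  rw [connected_iff]
  refine ⟨fun u v => ?_, ⟨0⟩⟩
  have key : ∀ w : Fin n, (flower n b).Reachable w 0 := by
    intro w
    by_cases hw : w = 0
    · exact hw ▸ Reachable.refl _
    · refine Adj.reachable ?_
      rw [flower_adj]
      refine ⟨hw, Or.inr (Or.inl ?_)⟩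
      simp
  exact (key u).trans (key v).symm

lemma two_mul_choose_two (b : ℕ) : 2 * b.choose 2 = b * (b - 1) := by
  rcases b with _ | c
  · rfl
  · rw [Nat.choose_two_right, Nat.succ_sub_one, Nat.mul_div_cancel']
    rw [mul_comm]
    exact (Nat.even_mul_succ_self c).two_dvd

lemma flower_edges (n b : ℕ) (hb : 1 ≤ b) (hn : 4 ≤ n) :
    (n - 1) + (n - 1) / b * b.choose 2 ≤ (flower n b).edgeSet.ncard := by
  classical
  have hnz : NeZero n := ⟨by omega⟩
  set G := flower n b with hG
  set t := (n - 1) / b with ht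
  have htb : t * b ≤ n - 1 := by rw [ht]; exact Nat.div_mul_le_self _ _
  have hdeg0 : n - 1 ≤ G.degree 0 := by
    have hsub : Finset.univ.erase (0 : Fin n) ⊆ G.neighborFinset 0 := by
      intro i hi
      rw [mem_neighborFinset, hG, flower_adj]
      exact ⟨((Finset.mem_erase.mp hi).1).symm, Or.inl (by simp)⟩
    calc n - 1 = (Finset.univ.erase (0 : Fin n)).card := by
          rw [Finset.card_erase_of_mem (Finset.mem_univ _), Finset.card_univ, Fintype.card_fin]
      _ ≤ _ := Finset.card_le_card hsub
  have hdegfull : ∀ j : Fin n, 1 ≤ j.val → j.val ≤ t * b → b ≤ G.degree j := by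
    intro j hj1 hj2
    have hj0 : j ≠ 0 := by
      intro h; rw [h] at hj1; simp at hj1
    set g := (j.val - 1) / b with hgdef
    have hgb1 : g * b ≤ j.val - 1 := by rw [hgdef]; exact Nat.div_mul_le_self _ _
    have hgb2 : j.val - 1 < (g + 1) * b := (Nat.div_lt_iff_lt_mul (by omega : 0 < b)).mp (by omega)
    have hmul : (g + 1) * b = g * b + b := by ring
    have hgt : g + 1 ≤ t := by
      by_contra h
      push_neg at h
      have : t * b ≤ g * b := Nat.mul_le_mul_right _ (by omega)
      omega
    have hgtb : (g + 1) * b ≤ t * b := Nat.mul_le_mul_right _ hgt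
    have hlt : ∀ x ∈ Finset.Ico (g * b + 1) (g * b + b + 1), x < n := by
      intro x hx
      rw [Finset.mem_Ico] at hx
      omega
    set s0 := (Finset.Ico (g * b + 1) (g * b + b + 1)).attachFin hlt with hs0
    have hjmem : j ∈ s0 := by
      rw [hs0, Finset.mem_attachFin, Finset.mem_Ico]
      omega
    have hsub : insert (0 : Fin n) (s0.erase j) ⊆ G.neighborFinset j := by
      intro i hi
      rw [mem_neighborFinset, hG, flower_adj]
      rcases Finset.mem_insert.mp hi with rfl | hi
      · exact ⟨hj0, Or.inr (Or.inl (by simp))⟩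
      · have hine := (Finset.mem_erase.mp hi).1
        have hival := (Finset.mem_erase.mp hi).2
        rw [hs0, Finset.mem_attachFin, Finset.mem_Ico] at hival
        have hieq : (i.val - 1) / b = g := Nat.div_eq_of_lt_le (by omega) (by omega)
        refine ⟨hine.symm, Or.inr (Or.inr ?_)⟩
        rw [hieq]
    have h0notmem : (0 : Fin n) ∉ s0.erase j := by
      intro h0
      have h0' := Finset.mem_of_mem_erase h0
      rw [hs0, Finset.mem_attachFin, Finset.mem_Ico, Fin.val_zero] at h0'
      omega
    have hcard : (insert (0 : Fin n) (s0.erase j)).card = b := by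
      rw [Finset.card_insert_of_notMem h0notmem, Finset.card_erase_of_mem hjmem, hs0,
        Finset.card_attachFin, Nat.card_Ico]
      omega
    calc b = (insert (0 : Fin n) (s0.erase j)).card := hcard.symm
      _ ≤ (G.neighborFinset j).card := Finset.card_le_card hsub
      _ = G.degree j := G.card_neighborFinset_eq_degree j
  have hdeg1 : ∀ j : Fin n, j ≠ 0 → 1 ≤ G.degree j := by
    intro j hj
    rw [← G.card_neighborFinset_eq_degree j]
    refine Finset.card_pos.mpr ⟨0, ?_⟩
    rw [mem_neighborFinset, hG, flower_adj]
    exact ⟨hj, Or.inr (Or.inl (by simp))⟩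
  have hsum : ∑ x ∈ Finset.range n, (if x = 0 then n - 1 else if x ≤ t * b then b else 1)
      ≤ ∑ v : Fin n, G.degree v := by
    rw [← Fin.sum_univ_eq_sum_range (fun x => if x = 0 then n - 1 else if x ≤ t * b then b else 1) n]
    apply Finset.sum_le_sum
    intro v _
    by_cases h0 : (v : ℕ) = 0
    · have hv : v = 0 := Fin.ext (by simp [h0])
      rw [if_pos h0, hv]
      exact hdeg0
    · rw [if_neg h0]
      by_cases h1 : (v : ℕ) ≤ t * b
      · rw [if_pos h1]
        exact hdegfull v (by omega) h1
      · rw [if_neg h1]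
        exact hdeg1 v (by intro h; rw [h] at h0; simp at h0)
  have hsumval : ∑ x ∈ Finset.range n, (if x = 0 then n - 1 else if x ≤ t * b then b else 1)
      = (n - 1) + t * b * b + (n - (t * b + 1)) := by
    set f : ℕ → ℕ := fun x => if x = 0 then n - 1 else if x ≤ t * b then b else 1 with hf
    have hA : ∑ x ∈ Finset.Ico 0 1, f x = n - 1 := by
      simp [hf]
    have hB : ∑ x ∈ Finset.Ico 1 (t * b + 1), f x = t * b * b := by
      rw [Finset.sum_congr rfl (g := fun _ => b) ?_, Finset.sum_const, Nat.card_Ico,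
        smul_eq_mul]
      · rw [Nat.add_sub_cancel]
      · intro x hx
        rw [Finset.mem_Ico] at hx
        rw [hf]
        simp only
        rw [if_neg (by omega), if_pos (by omega)]
    have hC : ∑ x ∈ Finset.Ico (t * b + 1) n, f x = n - (t * b + 1) := by
      rw [Finset.sum_congr rfl (g := fun _ => 1) ?_, Finset.sum_const, Nat.card_Ico,
        smul_eq_mul, mul_one]
      intro x hx
      rw [Finset.mem_Ico] at hx
      rw [hf]
      simp only
      rw [if_neg (by omega), if_neg (by omega)]
    rw [Finset.range_eq_Ico,
      ← Finset.sum_Ico_consecutive f (by omega : 0 ≤ t * b + 1) (by omega : t * b + 1 ≤ n),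
      ← Finset.sum_Ico_consecutive f (by omega : (0 : ℕ) ≤ 1) (by omega : 1 ≤ t * b + 1),
      hA, hB, hC]
  have hdeg : ∑ v : Fin n, G.degree v = 2 * G.edgeFinset.card :=
    G.sum_degrees_eq_twice_card_edges
  have hncard : G.edgeSet.ncard = G.edgeFinset.card := by
    rw [← coe_edgeFinset, Set.ncard_coe_finset]
  obtain ⟨c, rfl⟩ : ∃ c, b = c + 1 := ⟨b - 1, by omega⟩
  have hch : 2 * ((c + 1).choose 2) = (c + 1) * c := by
    rw [two_mul_choose_two]; simp
  have e1 : 2 * (t * ((c + 1).choose 2)) = t * (c + 1) * c := by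
    calc 2 * (t * ((c + 1).choose 2)) = t * (2 * ((c + 1).choose 2)) := by ring
      _ = t * ((c + 1) * c) := by rw [hch]
      _ = t * (c + 1) * c := by ring
  have hS : (n - 1) + (t * (c + 1) * c + t * (c + 1)) + (n - (t * (c + 1) + 1))
      ≤ 2 * G.edgeFinset.card := by
    have e2 : t * (c + 1) * (c + 1) = t * (c + 1) * c + t * (c + 1) := by ring
    rw [← e2]
    omega
  rw [hncard]
  generalize hZ : t * ((c + 1).choose 2) = Z at e1 ⊢
  generalize hX : t * (c + 1) * c = X at e1 hS
  generalize hY : t * (c + 1) = Y at hS htb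
  omega

lemma blk_ncard_le {n b : ℕ} (hb : 1 ≤ b) (g : ℕ) :
    ({i : Fin n | i.val ≠ 0 ∧ (i.val - 1) / b = g} : Set (Fin n)).ncard ≤ b := by
  have h1 : ({i : Fin n | i.val ≠ 0 ∧ (i.val - 1) / b = g} : Set (Fin n)).ncard
      ≤ (Set.Ico (g * b + 1) (g * b + b + 1)).ncard := by
    refine Set.ncard_le_ncard_of_injOn Fin.val ?_ (Fin.val_injective.injOn) (Set.finite_Ico _ _)
    rintro i ⟨hi0, hig⟩
    have h2 : g * b ≤ i.val - 1 := hig ▸ Nat.div_mul_le_self _ _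
    have h3 : i.val - 1 < (g + 1) * b := (Nat.div_lt_iff_lt_mul (by omega : 0 < b)).mp (by omega)
    have hmul : (g + 1) * b = g * b + b := by ring
    exact Set.mem_Ico.mpr (by omega)
  have h2 : (Set.Ico (g * b + 1) (g * b + b + 1)).ncard = b := by
    rw [← Finset.coe_Ico, Set.ncard_coe_finset, Nat.card_Ico]
    omega
  omega

lemma flower_free {V : Type*} [Fintype V] (T : SimpleGraph V) (k : ℕ) (hk : 4 ≤ k)
    (hcard : Fintype.card V = k) (hT : T.Connected) (n b : ℕ) (hb : 1 ≤ b) (hn : 4 ≤ n)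
    (hbk : b + 2 ≤ k) (hbm : b + 1 ≤ branchingNumber T) :
    ¬ ContainsCopy T (flower n b) := by
  have hnz : NeZero n := ⟨by omega⟩
  rintro ⟨f, hf⟩
  set blk : Fin n → ℕ := fun i => (i.val - 1) / b with hblk
  by_cases h0 : ∃ v : V, f v = 0
  · obtain ⟨v, hv⟩ := h0
    have hfne : ∀ u : V, u ≠ v → f u ≠ 0 := by
      intro u hu h
      exact hu (f.injective (h.trans hv.symm))
    have hconst : ∀ x y : ({u | u ≠ v} : Set V),
        (T.induce {u | u ≠ v}).Reachable x y → blk (f x) = blk (f y) := by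
      intro x y hr
      obtain ⟨p⟩ := hr
      induction p with
      | nil => rfl
      | cons ha _ ih =>
        refine Eq.trans ?_ ih
        rename_i a c _ _
        have hadj : T.Adj a.val c.val := by simpa using ha
        have := hf hadj
        rw [flower_adj] at this
        obtain ⟨-, h1 | h1 | h1⟩ := this
        · exact absurd (Fin.ext (by simpa using h1)) (hfne a.val a.2)
        · exact absurd (Fin.ext (by simpa using h1)) (hfne c.val c.2)
        · exact h1
    have hcomp : ∀ c : (T.induce {u | u ≠ v}).ConnectedComponent, c.supp.ncard ≤ b := by
      intro c
      obtain ⟨x0, hx0⟩ := c.exists_rep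
      refine le_trans (Set.ncard_le_ncard_of_injOn (fun y => f y.val) ?_ ?_ (Set.toFinite _))
        (blk_ncard_le hb (blk (f x0.val)))
      · rintro y hy
        have hreach : (T.induce {u | u ≠ v}).Reachable y x0 :=
          SimpleGraph.ConnectedComponent.exact (by
            rw [SimpleGraph.ConnectedComponent.mem_supp_iff] at hy
            exact hy.trans hx0.symm)
        refine ⟨fun h => hfne y.val y.2 (Fin.ext (by simpa using h)), hconst y x0 hreach⟩
      · intro a _ c _ h
        exact Subtype.ext (f.injective h)
    have h1 : largestCompDelVert T v ≤ b := by
      refine largest_le T v b ?_ hcomp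
      obtain ⟨u, hu⟩ := Fintype.exists_ne_of_one_lt_card (by omega) v
      exact ⟨u, hu⟩
    have h2 : branchingNumber T ≤ b := le_trans (Nat.sInf_le ⟨v, rfl⟩) h1
    omega
  · push_neg at h0
    have hconst : ∀ x y : V, T.Reachable x y → blk (f x) = blk (f y) := by
      intro x y hr
      obtain ⟨p⟩ := hr
      induction p with
      | nil => rfl
      | cons ha _ ih =>
        refine Eq.trans ?_ ih
        rename_i a c _ _
        have := hf ha
        rw [flower_adj] at this
        obtain ⟨-, h1 | h1 | h1⟩ := this
        · exact absurd (Fin.ext (by simpa using h1)) (h0 a)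
        · exact absurd (Fin.ext (by simpa using h1)) (h0 c)
        · exact h1
    have hne : Nonempty V := by
      rw [← Fintype.card_pos_iff]; omega
    obtain ⟨x0⟩ := hne
    have hinj : k ≤ ({i : Fin n | i.val ≠ 0 ∧ (i.val - 1) / b = blk (f x0)} : Set (Fin n)).ncard := by
      have := Set.ncard_le_ncard_of_injOn f
        (s := (Set.univ : Set V))
        (t := ({i : Fin n | i.val ≠ 0 ∧ (i.val - 1) / b = blk (f x0)} : Set (Fin n)))
        (fun a _ => ⟨fun h => h0 a (Fin.ext (by simpa using h)),
          hconst a x0 (hT.preconnected a x0)⟩)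
        (f.injective.injOn) (Set.toFinite _)
      rwa [Set.ncard_univ, Nat.card_eq_fintype_card, hcard] at this
    have := blk_ncard_le (n := n) hb (blk (f x0))
    omega

/-! ### The path construction (for the star case) -/

def pathG (n : ℕ) : SimpleGraph (Fin n) :=
  SimpleGraph.fromRel (fun i j => i.val + 1 = j.val)

lemma pathG_adj {n : ℕ} (i j : Fin n) :
    (pathG n).Adj i j ↔ i ≠ j ∧ (i.val + 1 = j.val ∨ j.val + 1 = i.val) := by
  simp only [pathG, fromRel_adj]

lemma pathG_connected {n : ℕ} (hn : 0 < n) : (pathG n).Connected := by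
  have : NeZero n := ⟨by omega⟩
  rw [connected_iff]
  have key : ∀ x : ℕ, ∀ hx : x < n, (pathG n).Reachable ⟨0, by omega⟩ ⟨x, hx⟩ := by
    intro x
    induction x with
    | zero => intro hx; exact Reachable.refl _
    | succ x ih =>
      intro hx
      refine (ih (by omega)).trans (Adj.reachable ?_)
      rw [pathG_adj]
      exact ⟨by simp [Fin.ext_iff], Or.inl rfl⟩
  refine ⟨fun u v => ?_, ⟨0⟩⟩
  have hu := key u.val u.isLt
  have hv := key v.val v.isLt
  exact Reachable.trans (Reachable.symm hu) hv

lemma pathG_edges {n : ℕ} (hn : 1 ≤ n) : n - 1 ≤ (pathG n).edgeSet.ncard := by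
  set φ : Fin (n - 1) → Sym2 (Fin n) :=
    fun x => s(⟨x.val, by omega⟩, ⟨x.val + 1, by omega⟩) with hφ
  have hinj : Function.Injective φ := by
    intro a b h
    rw [hφ] at h
    simp only [Sym2.eq_iff, Fin.mk.injEq] at h
    apply Fin.ext
    omega
  have hsub : Set.range φ ⊆ (pathG n).edgeSet := by
    rintro e ⟨x, rfl⟩
    rw [hφ, SimpleGraph.mem_edgeSet, pathG_adj]
    exact ⟨by simp [Fin.ext_iff], Or.inl rfl⟩
  calc n - 1 = Nat.card (Fin (n - 1)) := by simp
    _ = (Set.range φ).ncard := by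
        rw [← Nat.card_coe_set_eq, Nat.card_range_of_injective hinj]
    _ ≤ _ := Set.ncard_le_ncard hsub (Set.toFinite _)

lemma pathG_no_three {n : ℕ} (x a b c : Fin n) (hab : a ≠ b) (hac : a ≠ c) (hbc : b ≠ c)
    (ha : (pathG n).Adj x a) (hb : (pathG n).Adj x b) (hc : (pathG n).Adj x c) : False := by
  rw [pathG_adj] at ha hb hc
  have h1 : a.val ≠ b.val := fun h => hab (Fin.ext h)
  have h2 : a.val ≠ c.val := fun h => hac (Fin.ext h)
  have h3 : b.val ≠ c.val := fun h => hbc (Fin.ext h)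
  obtain ⟨-, ha⟩ := ha
  obtain ⟨-, hb⟩ := hb
  obtain ⟨-, hc⟩ := hc
  omega

end Aux

/-- Proposition (largest branch construction): if `T` is a tree on `k ≥ 4` vertices which
is not a path, then for `n ≥ k`,
`ex_c(n,T) ≥ n - 1 + ⌊(n-1)/(m(T)-1)⌋ C(m(T)-1, 2)`. -/
theorem exConn_ge_of_branchingNumber {V : Type*} [Fintype V] (T : SimpleGraph V) (k : ℕ)
    (hk : 4 ≤ k) (hcard : Fintype.card V = k) (hT : T.IsTree) (hnp : ¬ IsPathGraph T)
    (n : ℕ) (hn : k ≤ n) :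
    n - 1 + (n - 1) / (branchingNumber T - 1) * (branchingNumber T - 1).choose 2
      ≤ exConn n T := by
  classical
  have hV : Nonempty V := by rw [← Fintype.card_pos_iff]; omega
  have hexistsne : ∀ v : V, ∃ u : V, u ≠ v := fun v =>
    Fintype.exists_ne_of_one_lt_card (by omega) v
  set m := branchingNumber T with hm
  have hm1 : 1 ≤ m := by
    refine le_csInf (Set.range_nonempty _) ?_
    rintro x ⟨v, rfl⟩
    exact one_le_largest T v (hexistsne v)
  have hmk : m ≤ k - 1 := by
    obtain ⟨v⟩ := hV
    refine le_trans (Nat.sInf_le ⟨v, rfl⟩) (largest_le T v (k - 1) (hexistsne v) ?_)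
    intro c
    have h1 : c.supp.ncard ≤ ({u | u ≠ v} : Set V).ncard :=
      Set.ncard_le_ncard_of_injOn Subtype.val (fun y _ => y.2) (Subtype.val_injective.injOn)
        (Set.toFinite _)
    have h2 : ({u | u ≠ v} : Set V) = Set.univ \ {v} := by ext x; simp
    have h3 : ({u | u ≠ v} : Set V).ncard = k - 1 := by
      rw [h2, Set.ncard_diff (Set.subset_univ ({v} : Set V)), Set.ncard_univ,
        Set.ncard_singleton, Nat.card_eq_fintype_card, hcard]
    omega
  rcases Nat.lt_or_ge m 2 with hm2 | hm2
  · -- `m(T) = 1`: `T` is a star, and the path on `n` vertices works.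
    have hm1' : m = 1 := by omega
    rw [hm1']
    have hred : n - 1 + (n - 1) / (1 - 1) * Nat.choose (1 - 1) 2 = n - 1 := by norm_num
    rw [hred]
    -- find the star center
    have hmem := Nat.sInf_mem (Set.range_nonempty (fun v => largestCompDelVert T v))
    obtain ⟨v, hv⟩ := hmem
    have hbr1 : branchingNumber T = 1 := by rw [← hm]; exact hm1'
    have hv1 : largestCompDelVert T v = 1 := hv.trans hbr1
    have hadj : ∀ u : V, u ≠ v → T.Adj v u := by
      intro u hu
      obtain ⟨p⟩ := hT.isConnected.preconnected u v
      cases p with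
      | nil => exact absurd rfl hu
      | cons ha q =>
        rename_i w
        by_cases hw : w = v
        · exact (hw ▸ ha).symm
        · exfalso
          set c := (T.induce {x | x ≠ v}).connectedComponentMk ⟨u, hu⟩ with hc
          have hmemu : (⟨u, hu⟩ : ({x | x ≠ v} : Set V)) ∈ c.supp := by
            simp [hc, SimpleGraph.ConnectedComponent.mem_supp_iff]
          have hmemw : (⟨w, hw⟩ : ({x | x ≠ v} : Set V)) ∈ c.supp := by
            rw [SimpleGraph.ConnectedComponent.mem_supp_iff, hc]
            refine SimpleGraph.ConnectedComponent.sound (Adj.reachable ?_)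
            simpa using ha.symm
          have hne2 : (⟨u, hu⟩ : ({x | x ≠ v} : Set V)) ≠ ⟨w, hw⟩ := by
            intro h
            exact ha.ne (congrArg Subtype.val h)
          have hsub : ({⟨u, hu⟩, ⟨w, hw⟩} : Set ({x | x ≠ v} : Set V)) ⊆ c.supp := by
            intro y hy
            rcases hy with rfl | rfl
            · exact hmemu
            · exact hmemw
          have h2 : 2 ≤ c.supp.ncard := by
            rw [← Set.ncard_pair hne2]
            exact Set.ncard_le_ncard hsub (Set.toFinite _)
          have h3 := comp_ncard_le_largest T v c
          rw [hv1] at h3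
          omega
    -- three distinct vertices different from the center
    have hgen : ∀ s : Finset V, s.card < k → ∃ u, u ∉ s := by
      intro s hs
      by_contra h
      push_neg at h
      have : (Finset.univ : Finset V).card ≤ s.card := Finset.card_le_card (fun x _ => h x)
      rw [Finset.card_univ, hcard] at this
      omega
    obtain ⟨u1, h1⟩ := hgen {v} (by
      refine lt_of_le_of_lt (Finset.card_singleton v).le ?_; omega)
    obtain ⟨u2, h2⟩ := hgen {v, u1} (by
      refine lt_of_le_of_lt (Finset.card_insert_le _ _) ?_
      simp only [Finset.card_singleton]; omega)
    obtain ⟨u3, h3⟩ := hgen {v, u1, u2} (by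
      refine lt_of_le_of_lt (le_trans (Finset.card_insert_le _ _)
        (by exact Nat.succ_le_succ (Finset.card_insert_le _ _))) ?_
      simp only [Finset.card_singleton]; omega)
    simp only [Finset.mem_insert, Finset.mem_singleton, not_or] at h1 h2 h3
    refine le_trans (pathG_edges (by omega)) (le_exConn _ (pathG_connected (by omega)) ?_)
    rintro ⟨f, hf⟩
    exact pathG_no_three (f v) (f u1) (f u2) (f u3)
      (fun h => h2.2 (f.injective h).symm)
      (fun h => h3.2.1 (f.injective h).symm)
      (fun h => h3.2.2 (f.injective h).symm)
      (hf (hadj u1 h1))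
      (hf (hadj u2 h2.1))
      (hf (hadj u3 h3.1))
  · -- `m(T) ≥ 2`: use the flower construction with blocks of size `m(T) - 1`.
    refine le_trans (flower_edges n (m - 1) (by omega) (by omega))
      (le_exConn _ (flower_connected (by omega)) ?_)
    exact flower_free T k hk hcard hT.isConnected n (m - 1) (by omega) (by omega)
      (by omega) (by omega)
end

section
/- Let T be a tree on k ≥ 4 vertices. For an edge e = xy of T let w(e) = min{deg_T(x), deg_T(y)}, and let w(T) = max over edges e of T of w(e). Then for every n ≥ k, ex_c(n,T) ≥ (w(T)−1)(n−w(T)+1). -/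
open SimpleGraph

/-- `w(G) = max_{e = xy ∈ E(G)} min{deg_G(x), deg_G(y)}`. -/
noncomputable def maxEdgeWeight {V : Type*} [Fintype V] (G : SimpleGraph V)
    [DecidableRel G.Adj] : ℕ :=
  sSup {m | ∃ x y, G.Adj x y ∧ m = min (G.degree x) (G.degree y)}

/-- The complete bipartite graph on `Fin n` with parts `{i | i < a}` and its complement. -/
def bipGraph (n a : ℕ) : SimpleGraph (Fin n) where
  Adj i j := ((i : ℕ) < a ∧ ¬ (j : ℕ) < a) ∨ ((j : ℕ) < a ∧ ¬ (i : ℕ) < a)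
  symm := by constructor; intro i j h; tauto
  loopless := by constructor; intro i h; tauto

instance (n a : ℕ) : DecidableRel (bipGraph n a).Adj := fun i j => by
  unfold bipGraph; infer_instance

lemma bipGraph_adj {n a : ℕ} {i j : Fin n} :
    (bipGraph n a).Adj i j ↔
      (((i : ℕ) < a ∧ ¬ (j : ℕ) < a) ∨ ((j : ℕ) < a ∧ ¬ (i : ℕ) < a)) := Iff.rfl

lemma card_filter_lt (n a : ℕ) (ha : a ≤ n) :
    (Finset.univ.filter fun j : Fin n => (j : ℕ) < a).card = a := by
  induction n with
  | zero => simp at ha ⊢; omega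
  | succ m ih =>
    rcases Nat.lt_or_ge a (m+1) with h | h
    · have hb : a < m + 1 := h
      have : (Finset.univ.filter fun j : Fin (m+1) => (j : ℕ) < a)
          = Finset.Iio (⟨a, hb⟩ : Fin (m+1)) := by
        ext j; simp [Fin.lt_def]
      rw [this, Fin.card_Iio]
    · have : a = m + 1 := le_antisymm ha h
      subst this
      have : (Finset.univ.filter fun j : Fin (m+1) => (j : ℕ) < m + 1)
          = Finset.univ := by
        ext j; simp [j.isLt]; have := j.isLt; omega
      rw [this]; simp

lemma bipGraph_degree_left {n a : ℕ} (ha : a ≤ n) (i : Fin n) (hi : (i : ℕ) < a) :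
    (bipGraph n a).degree i = n - a := by
  have h1 : (bipGraph n a).neighborFinset i
      = Finset.univ.filter fun j : Fin n => ¬ (j : ℕ) < a := by
    ext j
    simp only [SimpleGraph.mem_neighborFinset, bipGraph_adj, Finset.mem_filter,
      Finset.mem_univ, true_and]
    constructor
    · rintro (⟨_, h⟩ | ⟨_, h⟩) <;> [exact h; exact absurd hi h]
    · intro h; exact Or.inl ⟨hi, h⟩
  rw [SimpleGraph.degree, h1, Finset.filter_not, Finset.card_sdiff_of_subset (Finset.filter_subset _ _),
    card_filter_lt n a ha, Finset.card_univ, Fintype.card_fin]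

lemma bipGraph_degree_right {n a : ℕ} (ha : a ≤ n) (i : Fin n) (hi : ¬ (i : ℕ) < a) :
    (bipGraph n a).degree i = a := by
  have h1 : (bipGraph n a).neighborFinset i
      = Finset.univ.filter fun j : Fin n => (j : ℕ) < a := by
    ext j
    simp only [SimpleGraph.mem_neighborFinset, bipGraph_adj, Finset.mem_filter,
      Finset.mem_univ, true_and]
    constructor
    · rintro (⟨h, _⟩ | ⟨h, _⟩) <;> [exact absurd h hi; exact h]
    · intro h; exact Or.inr ⟨h, hi⟩
  rw [SimpleGraph.degree, h1, card_filter_lt n a ha]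

lemma bipGraph_card_edges {n a : ℕ} (ha : a ≤ n) :
    (bipGraph n a).edgeSet.ncard = a * (n - a) := by
  have hsum : ∑ v : Fin n, (bipGraph n a).degree v = 2 * (a * (n - a)) := by
    rw [← Finset.sum_filter_add_sum_filter_not Finset.univ
      (fun j : Fin n => (j : ℕ) < a)]
    have h1 : ∑ v ∈ Finset.univ.filter (fun j : Fin n => (j : ℕ) < a),
        (bipGraph n a).degree v = a * (n - a) := by
      rw [Finset.sum_congr rfl (fun v hv => bipGraph_degree_left ha v
        (by simpa using hv))]
      rw [Finset.sum_const, card_filter_lt n a ha, smul_eq_mul]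
    have h2 : ∑ v ∈ Finset.univ.filter (fun j : Fin n => ¬ (j : ℕ) < a),
        (bipGraph n a).degree v = (n - a) * a := by
      rw [Finset.sum_congr rfl (fun v hv => bipGraph_degree_right ha v
        (by simpa using hv))]
      have : (Finset.univ.filter fun j : Fin n => ¬ (j : ℕ) < a).card = n - a := by
        rw [Finset.filter_not, Finset.card_sdiff_of_subset (Finset.filter_subset _ _),
          card_filter_lt n a ha, Finset.card_univ, Fintype.card_fin]
      rw [Finset.sum_const, this, smul_eq_mul]
    rw [h1, h2]; ring
  have h2 := (bipGraph n a).sum_degrees_eq_twice_card_edges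
  rw [hsum] at h2
  have hE : (bipGraph n a).edgeFinset.card = a * (n - a) := by omega
  rw [Set.ncard_eq_toFinset_card', ← SimpleGraph.edgeFinset, hE]

lemma bipGraph_connected {n a : ℕ} (ha : 1 ≤ a) (hb : a < n) :
    (bipGraph n a).Connected := by
  have hn : 0 < n := lt_of_le_of_lt (Nat.zero_le a) hb
  set u0 : Fin n := ⟨0, hn⟩ with hu0
  have hu0a : (u0 : ℕ) < a := ha
  set b0 : Fin n := ⟨a, hb⟩ with hb0
  have hb0a : ¬ (b0 : ℕ) < a := by simp [hb0]
  have key : ∀ x : Fin n, (bipGraph n a).Reachable x u0 := by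
    intro x
    by_cases hx : (x : ℕ) < a
    · exact ((SimpleGraph.Adj.reachable (Or.inl ⟨hx, hb0a⟩)).trans
        (SimpleGraph.Adj.reachable (Or.inr ⟨hu0a, hb0a⟩)))
    · exact SimpleGraph.Adj.reachable (Or.inr ⟨hu0a, hx⟩)
  haveI : Nonempty (Fin n) := ⟨u0⟩
  exact SimpleGraph.Connected.mk fun x y => (key x).trans (key y).symm

/-- Proposition (edge weight construction): for a tree `T` on `k ≥ 4` vertices and
`n ≥ k`, `ex_c(n,T) ≥ (w(T)-1)(n-w(T)+1)`. -/
theorem exConn_ge_of_maxEdgeWeight {V : Type*} [Fintype V] (T : SimpleGraph V)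
    [DecidableRel T.Adj] (k : ℕ) (hk : 4 ≤ k) (hcard : Fintype.card V = k) (hT : T.IsTree)
    (n : ℕ) (hn : k ≤ n) :
    (maxEdgeWeight T - 1) * (n - maxEdgeWeight T + 1) ≤ exConn n T := by
  set w := maxEdgeWeight T with hw
  rcases Nat.lt_or_ge w 2 with hw2 | hw2
  · have h0 : w - 1 = 0 := by omega
    rw [h0, zero_mul]
    exact Nat.zero_le _
  set S : Set ℕ := {m | ∃ x y, T.Adj x y ∧ m = min (T.degree x) (T.degree y)} with hS
  have hwS : w = sSup S := rfl
  have hSne : S.Nonempty := by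
    by_contra h
    rw [Set.not_nonempty_iff_eq_empty] at h
    rw [hwS, h] at hw2; simp [sSup_empty] at hw2
  have hSbdd : BddAbove S := by
    refine ⟨Fintype.card V, fun m hm => ?_⟩
    obtain ⟨x, y, hxy, rfl⟩ := hm
    exact le_trans (min_le_left _ _) (T.degree_lt_card_verts x).le
  obtain ⟨x, y, hxy, hmin⟩ : w ∈ S := hwS ▸ Nat.sSup_mem hSne hSbdd
  have hwx : w ≤ T.degree x := hmin ▸ min_le_left _ _
  have hwy : w ≤ T.degree y := hmin ▸ min_le_right _ _
  have hwk : w < k := hcard ▸ lt_of_le_of_lt hwx (T.degree_lt_card_verts x)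
  set a := w - 1 with haa
  have ha1 : 1 ≤ a := by omega
  have hab : a < n := by omega
  have han : a ≤ n := hab.le
  have hfree : ¬ ContainsCopy T (bipGraph n a) := by
    rintro ⟨f, hf⟩
    have hdeg : ∀ z : V, T.degree z ≤ (bipGraph n a).degree (f z) := by
      intro z
      rw [SimpleGraph.degree, SimpleGraph.degree]
      refine Finset.card_le_card_of_injOn f (fun u hu => ?_) f.injective.injOn
      rw [Finset.mem_coe, SimpleGraph.mem_neighborFinset] at hu ⊢
      exact hf hu
    rcases hf hxy with ⟨_, hy⟩ | ⟨_, hx⟩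
    · have h1 := hdeg y
      rw [bipGraph_degree_right han _ hy] at h1
      omega
    · have h1 := hdeg x
      rw [bipGraph_degree_right han _ hx] at h1
      omega
  have hmem : a * (n - a) ∈
      {m | ∃ G : SimpleGraph (Fin n), G.Connected ∧ ¬ ContainsCopy T G ∧ m = G.edgeSet.ncard} :=
    ⟨bipGraph n a, bipGraph_connected ha1 hab, hfree, (bipGraph_card_edges han).symm⟩
  have hbdd : BddAbove
      {m | ∃ G : SimpleGraph (Fin n), G.Connected ∧ ¬ ContainsCopy T G ∧ m = G.edgeSet.ncard} := by
    refine ⟨Fintype.card (Sym2 (Fin n)), fun m hm => ?_⟩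
    obtain ⟨G, _, _, rfl⟩ := hm
    calc G.edgeSet.ncard ≤ (Set.univ : Set (Sym2 (Fin n))).ncard :=
          Set.ncard_le_ncard (Set.subset_univ _) Set.finite_univ
      _ = Fintype.card (Sym2 (Fin n)) := by rw [Set.ncard_univ, Nat.card_eq_fintype_card]
  have hfinal : a * (n - a) ≤ exConn n T := le_csSup hbdd hmem
  have heq : (w - 1) * (n - w + 1) = a * (n - a) := by
    have : n - a = n - w + 1 := by omega
    rw [this]
  rw [heq]
  exact hfinal
end
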